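/- arXiv:2111.10211 — 4 statements merged into one kernel-verified Lean document; each statement's English description precedes it below -/
import Mathlib

section
/- For every integer m ≥ 0, the number consisting of the digit 1, followed by m nines, followed by the digit 8 in base ten (i.e., 2·10^{m+1} − 2, e.g., 18, 198, 1998, ...) is a v-palindrome in base 10. -/
/-- `v n` sums, over the prime factorization of `n`, each prime plus its
exponent when the exponent is at least `2` (primes with exponent `1`
contribute just the prime). -/
def v (n : ℕ) : ℕ :=
  ∑ p ∈ n.primeFactors, (p + if 2 ≤ n.factorization p then n.factorization p else 0)

/-- Base-`b` digit reversal. -/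
def revDigits (b n : ℕ) : ℕ := Nat.ofDigits b (Nat.digits b n).reverse

/-- `n` is a v-palindrome in base `b`. -/
def IsVPalindrome (b n : ℕ) : Prop :=
  ¬ b ∣ n ∧ n ≠ revDigits b n ∧ v n = v (revDigits b n)

lemma fact_two_mul {N : ℕ} (h0 : N ≠ 0) (p : ℕ) :
    (2 * N).factorization p = (if p = 2 then 1 else 0) + N.factorization p := by
  rw [Nat.factorization_mul two_ne_zero h0, Nat.Prime.factorization Nat.prime_two]
  simp [Finsupp.single_apply, eq_comm]

lemma v_two_mul {N : ℕ} (hN : ¬ 2 ∣ N) (h1 : 1 < N) : v (2 * N) = 2 + v N := by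
  have h0 : N ≠ 0 := by omega
  have h2 : 2 ∉ N.primeFactors := by
    simp [Nat.mem_primeFactors, hN]
  have hP : (2 * N).primeFactors = insert 2 N.primeFactors := by
    rw [Nat.primeFactors_mul two_ne_zero h0, Nat.Prime.primeFactors Nat.prime_two]
    ext p; simp
  unfold v
  rw [hP, Finset.sum_insert h2]
  have hf2 : (2 * N).factorization 2 = 1 := by
    rw [fact_two_mul h0, if_pos rfl, Nat.factorization_eq_zero_of_not_dvd hN]
  rw [hf2]
  have hrest : ∀ p ∈ N.primeFactors,
      (p + if 2 ≤ (2 * N).factorization p then (2 * N).factorization p else 0)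
        = (p + if 2 ≤ N.factorization p then N.factorization p else 0) := by
    intro p hp
    have hp2 : p ≠ 2 := fun h => h2 (h ▸ hp)
    rw [fact_two_mul h0, if_neg hp2, zero_add]
  rw [Finset.sum_congr rfl hrest]
  norm_num

lemma v_nine_mul {N : ℕ} (h9 : 9 ∣ N) (h0 : N ≠ 0) : v (9 * N) = 2 + v N := by
  have h3 : (3 : ℕ).Prime := Nat.prime_three
  have h3d : 3 ∣ N := dvd_trans (by norm_num) h9
  have h3m : 3 ∈ N.primeFactors := Nat.mem_primeFactors.mpr ⟨h3, h3d, h0⟩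
  have he : 2 ≤ N.factorization 3 := by
    rw [← Nat.Prime.pow_dvd_iff_le_factorization h3 h0]
    simpa using h9
  have hfact : ∀ p, (9 * N).factorization p
      = (if p = 3 then 2 else 0) + N.factorization p := by
    intro p
    rw [show (9 : ℕ) = 3 ^ 2 by norm_num, Nat.factorization_mul (by norm_num) h0,
        Nat.Prime.factorization_pow h3]
    simp [Finsupp.single_apply, eq_comm]
  have hP : (9 * N).primeFactors = N.primeFactors := by
    rw [Nat.primeFactors_mul (by norm_num) h0,
        show (9 : ℕ) = 3 ^ 2 by norm_num,
        Nat.primeFactors_pow _ (by norm_num), Nat.Prime.primeFactors h3]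
    exact Finset.union_eq_right.mpr (Finset.singleton_subset_iff.mpr h3m)
  unfold v
  rw [hP, ← Finset.insert_erase h3m, Finset.sum_insert (Finset.notMem_erase _ _),
      Finset.sum_insert (Finset.notMem_erase _ _)]
  have hf3 : (9 * N).factorization 3 = 2 + N.factorization 3 := by
    rw [hfact]; simp
  have hrest : ∀ p ∈ N.primeFactors.erase 3,
      (p + if 2 ≤ (9 * N).factorization p then (9 * N).factorization p else 0)
        = (p + if 2 ≤ N.factorization p then N.factorization p else 0) := by
    intro p hp
    have hp3 : p ≠ 3 := Finset.ne_of_mem_erase hp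
    rw [hfact, if_neg hp3, zero_add]
  rw [Finset.sum_congr rfl hrest, hf3, if_pos (by omega), if_pos he]
  omega

lemma digits_aux : ∀ m : ℕ, Nat.digits 10 (2 * 10 ^ m - 1) = List.replicate m 9 ++ [1]
  | 0 => by norm_num
  | (m + 1) => by
    have hpow : (1 : ℕ) ≤ 10 ^ m := Nat.one_le_pow _ _ (by norm_num)
    have hs : (10 : ℕ) ^ (m + 1) = 10 * 10 ^ m := by ring
    have hpos : 0 < 2 * 10 ^ (m + 1) - 1 := by omega
    rw [Nat.digits_def' (by norm_num : 1 < 10) hpos]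
    have h1 : (2 * 10 ^ (m + 1) - 1) % 10 = 9 := by omega
    have h2 : (2 * 10 ^ (m + 1) - 1) / 10 = 2 * 10 ^ m - 1 := by omega
    rw [h1, h2, digits_aux m]
    simp [List.replicate_succ]

lemma ofDigits_aux : ∀ m : ℕ,
    Nat.ofDigits 10 (List.replicate m 9 ++ [8]) = 9 * 10 ^ m - 1
  | 0 => by norm_num [Nat.ofDigits]
  | (m + 1) => by
    have hpow : (1 : ℕ) ≤ 10 ^ m := Nat.one_le_pow _ _ (by norm_num)
    have hs : (10 : ℕ) ^ (m + 1) = 10 * 10 ^ m := by ring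
    rw [List.replicate_succ, List.cons_append, Nat.ofDigits_cons, ofDigits_aux m]
    omega

lemma rev_eq (m : ℕ) : revDigits 10 (2 * 10 ^ (m + 1) - 2) = 9 * (10 ^ (m + 1) - 1) := by
  have hpow : (1 : ℕ) ≤ 10 ^ m := Nat.one_le_pow _ _ (by norm_num)
  have hs : (10 : ℕ) ^ (m + 1) = 10 * 10 ^ m := by ring
  have hpos : 0 < 2 * 10 ^ (m + 1) - 2 := by omega
  have hd : Nat.digits 10 (2 * 10 ^ (m + 1) - 2)
      = 8 :: (List.replicate m 9 ++ [1]) := by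
    rw [Nat.digits_def' (by norm_num : 1 < 10) hpos]
    have h1 : (2 * 10 ^ (m + 1) - 2) % 10 = 8 := by omega
    have h2 : (2 * 10 ^ (m + 1) - 2) / 10 = 2 * 10 ^ m - 1 := by omega
    rw [h1, h2, digits_aux m]
  unfold revDigits
  rw [hd]
  have hrev : (8 :: (List.replicate m 9 ++ [1])).reverse
      = 1 :: (List.replicate m 9 ++ [8]) := by
    simp [List.reverse_append]
  rw [hrev, Nat.ofDigits_cons, ofDigits_aux m]
  omega

theorem stmt_3 (m : ℕ) : IsVPalindrome 10 (2 * 10 ^ (m + 1) - 2) := by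
  have hpow : (1 : ℕ) ≤ 10 ^ m := Nat.one_le_pow _ _ (by norm_num)
  have hs : (10 : ℕ) ^ (m + 1) = 10 * 10 ^ m := by ring
  set N : ℕ := 10 ^ (m + 1) - 1 with hN
  have hNval : 2 * 10 ^ (m + 1) - 2 = 2 * N := by omega
  have h9 : 9 ∣ N := by
    have := Nat.sub_dvd_pow_sub_pow 10 1 (m + 1)
    simpa using this
  have hodd : ¬ 2 ∣ N := by
    have h2 : (2 : ℕ) ∣ 10 ^ (m + 1) := dvd_trans (by norm_num) (dvd_pow_self 10 (Nat.succ_ne_zero m))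
    omega
  have hN1 : 1 < N := by omega
  refine ⟨?_, ?_, ?_⟩
  · intro h
    have : (10 : ℕ) ∣ 2 * 10 ^ (m + 1) - 2 := h
    omega
  · rw [rev_eq m, hNval]
    omega
  · rw [rev_eq m, hNval]
    rw [v_two_mul hodd hN1, v_nine_mul h9 (by omega)]
end

section
/- For every integer k ≥ 1, the number formed by concatenating k copies of the digits '18' in base ten, i.e., 18·(10^{2k} − 1)/99, is a v-palindrome in base 10. -/
private def vpS (k : ℕ) : ℕ := ∑ i ∈ Finset.range k, 100 ^ i

private lemma vpS_succ (k : ℕ) : vpS (k + 1) = 1 + 100 * vpS k := by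
  unfold vpS
  rw [Finset.sum_range_succ']
  simp [pow_succ, Finset.mul_sum, mul_comm, add_comm]

private lemma vpS_succ' (k : ℕ) : vpS (k + 1) = vpS k + 100 ^ k := by
  unfold vpS; rw [Finset.sum_range_succ]

private lemma vpS_geom (k : ℕ) : 99 * vpS k + 1 = 100 ^ k := by
  induction k with
  | zero => simp [vpS]
  | succ k ih =>
    rw [vpS_succ, pow_succ]
    omega

private lemma v_mul {x y : ℕ} (hx : x ≠ 0) (hy : y ≠ 0) (h : Nat.Coprime x y) :
    v (x * y) = v x + v y := by
  unfold v
  have hdisj := Nat.Coprime.disjoint_primeFactors h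
  rw [Nat.primeFactors_mul hx hy, Finset.sum_union hdisj]
  congr 1
  · apply Finset.sum_congr rfl
    intro p hp
    have hy0 : y.factorization p = 0 := by
      have hnp : p ∉ y.primeFactors := Finset.disjoint_left.mp hdisj hp
      rw [← Nat.support_factorization] at hnp
      exact Finsupp.notMem_support_iff.mp hnp
    rw [Nat.factorization_mul hx hy]
    simp [hy0]
  · apply Finset.sum_congr rfl
    intro p hp
    have hx0 : x.factorization p = 0 := by
      have hnp : p ∉ x.primeFactors := Finset.disjoint_right.mp hdisj hp
      rw [← Nat.support_factorization] at hnp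
      exact Finsupp.notMem_support_iff.mp hnp
    rw [Nat.factorization_mul hx hy]
    simp [hx0]

private lemma v_prime_pow {p e : ℕ} (hp : p.Prime) (he : e ≠ 0) :
    v (p ^ e) = p + if 2 ≤ e then e else 0 := by
  unfold v
  rw [Nat.primeFactors_pow _ he, Nat.Prime.primeFactors hp, hp.factorization_pow]
  simp

private lemma v_two : v 2 = 2 := by
  have := v_prime_pow Nat.prime_two one_ne_zero
  simpa using this

private lemma v_18_81 {R : ℕ} (hR : R ≠ 0) (hodd : ¬ 2 ∣ R) : v (18 * R) = v (81 * R) := by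
  have h3 : Nat.Prime 3 := by norm_num
  set a := R.factorization 3 with ha
  have hRm : 3 ^ a * (R / 3 ^ a) = R := Nat.ordProj_mul_ordCompl_eq_self R 3
  set m := R / 3 ^ a with hm
  have hmdvd : m ∣ R := Nat.ordCompl_dvd R 3
  have hm0 : m ≠ 0 := by
    intro h; rw [h, mul_zero] at hRm; exact hR hRm.symm
  have h3m : ¬ 3 ∣ m := Nat.not_dvd_ordCompl h3 hR
  have h2m : ¬ 2 ∣ m := fun h => hodd (h.trans hmdvd)
  have e18 : 18 * R = 2 * (3 ^ (a + 2) * m) := by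
    rw [← hRm]; ring
  have e81 : 81 * R = 3 ^ (a + 4) * m := by
    rw [← hRm]; ring
  have c2 : Nat.Coprime 2 (3 ^ (a + 2) * m) := by
    rw [Nat.Prime.coprime_iff_not_dvd Nat.prime_two]
    intro h
    rcases (Nat.Prime.dvd_mul Nat.prime_two).mp h with h | h
    · have := Nat.Prime.dvd_of_dvd_pow Nat.prime_two h
      omega
    · exact h2m h
  have c3 : Nat.Coprime 3 m := (Nat.Prime.coprime_iff_not_dvd h3).mpr h3m
  have hpm2 : (3 : ℕ) ^ (a + 2) ≠ 0 := pow_ne_zero _ (by norm_num)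
  have hpm4 : (3 : ℕ) ^ (a + 4) ≠ 0 := pow_ne_zero _ (by norm_num)
  rw [e18, e81, v_mul two_ne_zero (mul_ne_zero hpm2 hm0) c2,
      v_mul hpm2 hm0 (Nat.Coprime.pow_left _ c3),
      v_mul hpm4 hm0 (Nat.Coprime.pow_left _ c3),
      v_prime_pow h3 (by omega), v_prime_pow h3 (by omega), v_two]
  simp only [show 2 ≤ a + 2 from by omega, show 2 ≤ a + 4 from by omega, if_pos]
  omega

private lemma digits_aux_s4 (x : ℕ) :
    Nat.digits 10 (18 + 100 * x) = 8 :: 1 :: Nat.digits 10 x := by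
  rw [Nat.digits_def' (by norm_num : (1:ℕ) < 10) (by omega)]
  have h1 : (18 + 100 * x) % 10 = 8 := by omega
  have h2 : (18 + 100 * x) / 10 = 1 + 10 * x := by omega
  rw [h1, h2, Nat.digits_def' (by norm_num : (1:ℕ) < 10) (by omega)]
  have h3 : (1 + 10 * x) % 10 = 1 := by omega
  have h4 : (1 + 10 * x) / 10 = x := by omega
  rw [h3, h4]

private lemma rev_18S (k : ℕ) :
    (Nat.digits 10 (18 * vpS k)).length = 2 * k ∧
      Nat.ofDigits 10 (Nat.digits 10 (18 * vpS k)).reverse = 81 * vpS k := by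
  induction k with
  | zero => simp [vpS]
  | succ k ih =>
    have hd : 18 * vpS (k + 1) = 18 + 100 * (18 * vpS k) := by rw [vpS_succ]; ring
    rw [hd, digits_aux_s4]
    refine ⟨by simp [ih.1]; omega, ?_⟩
    rw [List.reverse_cons, List.reverse_cons, List.append_assoc,
        Nat.ofDigits_append, ih.2]
    have hlen : (Nat.digits 10 (18 * vpS k)).reverse.length = 2 * k := by
      rw [List.length_reverse, ih.1]
    rw [hlen]
    have h100 : (10 : ℕ) ^ (2 * k) = 100 ^ k := by
      rw [pow_mul]; norm_num
    have : Nat.ofDigits 10 ([1] ++ [8] : List ℕ) = 81 := by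
      simp [Nat.ofDigits]
    rw [this, h100, vpS_succ']
    ring

theorem stmt_4 (k : ℕ) (hk : 1 ≤ k) : IsVPalindrome 10 (18 * ((10 ^ (2 * k) - 1) / 99)) := by
  have hS : (10 ^ (2 * k) - 1) / 99 = vpS k := by
    have h1 := vpS_geom k
    have h2 : (10 : ℕ) ^ (2 * k) = 100 ^ k := by rw [pow_mul]; norm_num
    rw [h2]
    have h3 : 100 ^ k - 1 = 99 * vpS k := by omega
    rw [h3, Nat.mul_div_cancel_left _ (by norm_num : (0:ℕ) < 99)]
  rw [hS]
  obtain ⟨k', rfl⟩ : ∃ k', k = k' + 1 := ⟨k - 1, by omega⟩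
  have hSv : vpS (k' + 1) = 1 + 100 * vpS k' := vpS_succ k'
  have hrev : revDigits 10 (18 * vpS (k' + 1)) = 81 * vpS (k' + 1) := (rev_18S (k' + 1)).2
  refine ⟨?_, ?_, ?_⟩
  · omega
  · rw [hrev]; omega
  · rw [hrev]
    exact v_18_81 (by omega) (by omega)
end

section
/- Let b ≥ 2. Suppose there exist positive integers a, c, t with a < c < b, gcd(t, 30) = 1, ab + c = 5t, and cb + a = 6t. Then the two-digit base-b number ab + c is a v-palindrome in base b. -/
lemma v_mul_coprime {m n : ℕ} (hm : m ≠ 0) (hn : n ≠ 0) (h : Nat.Coprime m n) :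
    v (m * n) = v m + v n := by
  unfold v
  rw [Nat.primeFactors_mul hm hn,
    Finset.sum_union (Nat.Coprime.disjoint_primeFactors h)]
  congr 1
  · refine Finset.sum_congr rfl fun p hp => ?_
    have hz : n.factorization p = 0 := by
      apply Nat.factorization_eq_zero_of_not_dvd
      intro hdvd
      have hpn : p ∈ n.primeFactors :=
        Nat.mem_primeFactors.mpr ⟨Nat.prime_of_mem_primeFactors hp, hdvd, hn⟩
      exact (Finset.disjoint_left.mp (Nat.Coprime.disjoint_primeFactors h)) hp hpn
    rw [Nat.factorization_mul hm hn]
    simp [hz]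
  · refine Finset.sum_congr rfl fun p hp => ?_
    have hz : m.factorization p = 0 := by
      apply Nat.factorization_eq_zero_of_not_dvd
      intro hdvd
      have hpm : p ∈ m.primeFactors :=
        Nat.mem_primeFactors.mpr ⟨Nat.prime_of_mem_primeFactors hp, hdvd, hm⟩
      exact (Finset.disjoint_right.mp (Nat.Coprime.disjoint_primeFactors h)) hp hpm
    rw [Nat.factorization_mul hm hn]
    simp [hz]

lemma v_prime {p : ℕ} (hp : p.Prime) : v p = p := by
  unfold v
  rw [hp.primeFactors]
  simp [hp.factorization]

theorem stmt_7 (b a c t : ℕ) (hb : 2 ≤ b) (ha : 0 < a) (hac : a < c) (hcb : c < b)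
    (ht : 0 < t) (hgcd : Nat.gcd t 30 = 1)
    (h1 : a * b + c = 5 * t) (h2 : c * b + a = 6 * t) :
    IsVPalindrome b (a * b + c) := by
  have hb1 : 1 < b := hb
  have hc0 : 0 < c := lt_trans ha hac
  -- digits of a*b+c are [c, a]
  have hmod : (a * b + c) % b = c := by
    rw [Nat.mul_add_mod', Nat.mod_eq_of_lt hcb]
  have hdiv : (a * b + c) / b = a := by
    rw [mul_comm a b, Nat.mul_add_div (by omega), Nat.div_eq_of_lt hcb, Nat.add_zero]
  have hdigits : Nat.digits b (a * b + c) = [c, a] := by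
    rw [Nat.digits_def' hb1 (by positivity), hmod, hdiv,
      Nat.digits_def' hb1 ha, Nat.mod_eq_of_lt (lt_trans hac hcb),
      Nat.div_eq_of_lt (lt_trans hac hcb), Nat.digits_zero]
  have hrev : revDigits b (a * b + c) = c * b + a := by
    simp [revDigits, hdigits, Nat.ofDigits]
    ring
  -- coprimality facts
  have ht30 : Nat.Coprime t 30 := hgcd
  have hc5 : Nat.Coprime 5 t := (ht30.coprime_dvd_right (by norm_num)).symm
  have hc6 : Nat.Coprime 6 t := (ht30.coprime_dvd_right (by norm_num)).symm
  have hc23 : Nat.Coprime 2 3 := by norm_num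
  have hv5 : v (5 * t) = 5 + v t :=
    (v_mul_coprime (by norm_num) (by omega) hc5).trans (by rw [v_prime (by norm_num)])
  have hv6 : v (6 * t) = 5 + v t := by
    have h6 : v 6 = 5 := by
      rw [show (6:ℕ) = 2 * 3 from rfl,
        v_mul_coprime (by norm_num) (by norm_num) hc23,
        v_prime Nat.prime_two, v_prime Nat.prime_three]
    rw [v_mul_coprime (by norm_num) (by omega) hc6, h6]
  refine ⟨?_, ?_, ?_⟩
  · intro hdvd
    have : b ∣ c := (Nat.dvd_add_right ⟨a, mul_comm a b⟩).mp hdvd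
    exact absurd (Nat.le_of_dvd hc0 this) (by omega)
  · rw [hrev, h1, h2]; omega
  · rw [hrev, h1, h2, hv5, hv6]
end

section
/- If k ≡ 4 (mod 11) is a positive integer, then f(30k) = ((30k)² − 1)/11, where f(b) = lcm( (b²−1)/gcd(5b−6, b²−1), (b²−1)/gcd(6b−5, b²−1) ). -/
theorem stmt_13 (k : ℕ) (hk : 0 < k) (hmod : k % 11 = 4) :
    Nat.lcm (((30 * k) ^ 2 - 1) / Nat.gcd (5 * (30 * k) - 6) ((30 * k) ^ 2 - 1))
        (((30 * k) ^ 2 - 1) / Nat.gcd (6 * (30 * k) - 5) ((30 * k) ^ 2 - 1)) =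
      ((30 * k) ^ 2 - 1) / 11 := by
  obtain ⟨m, rfl⟩ : ∃ m, k = 11 * m + 4 := ⟨k / 11, by omega⟩
  have hsq : (30 * (11 * m + 4)) ^ 2 = 108900 * m ^ 2 + 79200 * m + 14400 := by ring
  have h1 : 5 * (30 * (11 * m + 4)) - 6 = 11 * (150 * m + 54) := by omega
  have h2 : (30 * (11 * m + 4)) ^ 2 - 1 = 11 * (9900 * m ^ 2 + 7200 * m + 1309) := by omega
  have h3 : 6 * (30 * (11 * m + 4)) - 5 = 11 * (180 * m + 65) := by omega
  rw [h1, h2, h3]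
  set N := 9900 * m ^ 2 + 7200 * m + 1309 with hN
  -- coprimality facts
  have c1 : Nat.gcd (150 * m + 54) N = 1 := by
    have key : (150 * m + 54) * (1650 * m + 606) + 1 = 25 * N := by rw [hN]; ring
    have d1 : Nat.gcd (150 * m + 54) N ∣ (150 * m + 54) * (1650 * m + 606) :=
      Dvd.dvd.mul_right (Nat.gcd_dvd_left _ _) _
    have d2 : Nat.gcd (150 * m + 54) N ∣ 25 * N := Dvd.dvd.mul_left (Nat.gcd_dvd_right _ _) _
    have : Nat.gcd (150 * m + 54) N ∣ 1 := by
      have := Nat.dvd_sub d2 d1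
      rwa [show 25 * N - (150 * m + 54) * (1650 * m + 606) = 1 by omega] at this
    exact Nat.eq_one_of_dvd_one this
  have c2 : Nat.gcd (180 * m + 65) N = 1 := by
    have key : (180 * m + 65) * (1980 * m + 725) = 36 * N + 1 := by rw [hN]; ring
    have d1 : Nat.gcd (180 * m + 65) N ∣ (180 * m + 65) * (1980 * m + 725) :=
      Dvd.dvd.mul_right (Nat.gcd_dvd_left _ _) _
    have d2 : Nat.gcd (180 * m + 65) N ∣ 36 * N := Dvd.dvd.mul_left (Nat.gcd_dvd_right _ _) _
    have : Nat.gcd (180 * m + 65) N ∣ 1 := by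
      have := Nat.dvd_sub d1 d2
      rwa [show (180 * m + 65) * (1980 * m + 725) - 36 * N = 1 by rw [key]; exact Nat.add_sub_cancel_left _ _] at this
    exact Nat.eq_one_of_dvd_one this
  rw [Nat.gcd_mul_left, Nat.gcd_mul_left, c1, c2, mul_one,
    Nat.mul_div_cancel_left _ (by norm_num : (0:ℕ) < 11), Nat.lcm_self]
end
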